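/- With the mollifier setup above, for all α, β ∈ [-1,1] with 0 ≤ β - α ≤ 1 there exists C_{α,β} > 0 independent of N and ε such that for all φ ∈ H_N, ‖ρ^{ε,N} *_N φ - φ‖_{H_N^α} ≤ C_{α,β} ε^{β-α} ‖φ‖_{H_N^β}. -/

import Mathlib

/-- Eigenvalues of the discrete Laplacian: `λ_{m,N} = 2 N² (1 - cos(2π m / N))`. -/
noncomputable def lamd (N m : ℕ) : ℝ := 2 * (N : ℝ)^2 * (1 - Real.cos (2 * Real.pi * m / N))

/-- `L²([0,1])` inner product of two step functions constant on the intervals `I_j`. -/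
noncomputable def ip (N : ℕ) (f g : Fin N → ℝ) : ℝ := (1 / (N : ℝ)) * ∑ j, f j * g j

/-- Discrete trigonometric eigenfunction `φ_{m,N}` (value on the cell `I_j`). -/
noncomputable def phiN (N m : ℕ) : Fin N → ℝ :=
  fun j => if m = 0 then 1 else Real.sqrt 2 * Real.cos (2 * Real.pi * m * (j : ℕ) / N)

/-- Discrete trigonometric eigenfunction `ψ_{m,N}` (value on the cell `I_j`). -/
noncomputable def psiN (N m : ℕ) : Fin N → ℝ :=
  fun j => Real.sqrt 2 * Real.sin (2 * Real.pi * m * (j : ℕ) / N)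

/-- Square of the discrete Sobolev norm `‖f‖²_{H_N^γ}`. -/
noncomputable def sobNormSq (N : ℕ) (γ : ℝ) (f : Fin N → ℝ) : ℝ :=
  ∑ m ∈ Finset.range ((N - 1) / 2 + 1),
    (1 + lamd N m) ^ γ * ((ip N f (phiN N m))^2 + (ip N f (psiN N m))^2)

/-- Discrete Sobolev norm `‖f‖_{H_N^γ}`. -/
noncomputable def sobNorm (N : ℕ) (γ : ℝ) (f : Fin N → ℝ) : ℝ := Real.sqrt (sobNormSq N γ f)

/-- Centered integer index of a cell: identifies `Fin N` with `{-(N-1)/2, …, (N-1)/2}`. -/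
def centIdx (N : ℕ) (k : Fin N) : ℤ :=
  if (k : ℕ) ≤ (N - 1) / 2 then ((k : ℕ) : ℤ) else ((k : ℕ) : ℤ) - (N : ℤ)

/-- The projection `P_N` onto `H_N` by local averaging over the cell
`[(2k-1)/(2N), (2k+1)/(2N))` (centered cells of `[-1/2, 1/2)`). -/
noncomputable def projN (N : ℕ) (f : ℝ → ℝ) : Fin N → ℝ :=
  fun k => (N : ℝ) *
    ∫ y in ((2 * (centIdx N k : ℝ) - 1) / (2 * N))..((2 * (centIdx N k : ℝ) + 1) / (2 * N)), f y

/-- Discrete (periodic, normalized) convolution on `H_N`: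
`(a *_N b)_k = (1/N) Σ_ℓ a_{k-ℓ} b_ℓ`. -/
noncomputable def convN (N : ℕ) [NeZero N] (a b : Fin N → ℝ) : Fin N → ℝ :=
  fun k => (1 / (N : ℝ)) * ∑ l : Fin N, a (k - l) * b l

/-- The rescaled mollifier `ρ^ε(y) = ε⁻¹ ρ(y/ε)`. -/
noncomputable def mollify (ρ : ℝ → ℝ) (ε : ℝ) : ℝ → ℝ := fun y => ε⁻¹ * ρ (y / ε)

/-! ### Auxiliary periodicity lemmas -/

namespace Stmt15

open Real Finset MeasureTheory

lemma cos_congr (m N : ℕ) (hN : (N:ℝ) ≠ 0) {x y : ℤ} (h : (N:ℤ) ∣ (x - y)) :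
    Real.cos (2 * Real.pi * m * x / N) = Real.cos (2 * Real.pi * m * y / N) := by
  obtain ⟨t, ht⟩ := h
  have hx : (x:ℝ) = y + N * t := by
    have h2 : (x:ℝ) - y = N * t := by exact_mod_cast congrArg (fun z : ℤ => (z : ℝ)) ht
    linarith
  have harg : 2 * Real.pi * m * (x:ℝ) / N
      = 2 * Real.pi * m * y / N + ((m * t : ℤ) : ℝ) * (2 * Real.pi) := by
    rw [hx]; push_cast; field_simp
  rw [harg, Real.cos_add_int_mul_two_pi]

lemma sin_congr (m N : ℕ) (hN : (N:ℝ) ≠ 0) {x y : ℤ} (h : (N:ℤ) ∣ (x - y)) :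
    Real.sin (2 * Real.pi * m * x / N) = Real.sin (2 * Real.pi * m * y / N) := by
  obtain ⟨t, ht⟩ := h
  have hx : (x:ℝ) = y + N * t := by
    have h2 : (x:ℝ) - y = N * t := by exact_mod_cast congrArg (fun z : ℤ => (z : ℝ)) ht
    linarith
  have harg : 2 * Real.pi * m * (x:ℝ) / N
      = 2 * Real.pi * m * y / N + ((m * t : ℤ) : ℝ) * (2 * Real.pi) := by
    rw [hx]; push_cast; field_simp
  rw [harg, Real.sin_add_int_mul_two_pi]

lemma val_sub_congr (N : ℕ) [NeZero N] (k j : Fin N) :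
    (N:ℤ) ∣ ((((k - j : Fin N) : ℕ) : ℤ) - (((k:ℕ):ℤ) - ((j:ℕ):ℤ))) := by
  have h : ((k - j : Fin N) + j).val = (((k - j : Fin N)).val + j.val) % N := by
    rw [Fin.add_def]
  rw [sub_add_cancel] at h
  have h2 : ((k:ℕ):ℤ) = (((k - j : Fin N)).val + j.val : ℤ) % N := by
    rw [h]; push_cast; ring_nf
  have h3 : (N:ℤ) ∣ ((((k - j : Fin N)).val + j.val : ℤ) - (k:ℕ)) :=
    Int.dvd_self_sub_of_emod_eq h2.symm
  have h4 : ((((k - j : Fin N)).val + j.val : ℤ) - (k:ℕ))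
      = ((((k - j : Fin N) : ℕ) : ℤ) - (((k:ℕ):ℤ) - ((j:ℕ):ℤ))) := by push_cast; ring
  rwa [h4] at h3

lemma val_neg_congr (N : ℕ) [NeZero N] (k : Fin N) :
    (N:ℤ) ∣ ((((-k : Fin N) : ℕ) : ℤ) - (-((k:ℕ):ℤ))) := by
  have := val_sub_congr N 0 k
  simpa using this

variable {N : ℕ} [NeZero N]

lemma NposR : (0:ℝ) < (N:ℝ) := by
  exact_mod_cast Nat.pos_of_ne_zero (NeZero.ne N)

lemma cos_val_sub (m : ℕ) (k j : Fin N) :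
    Real.cos (2 * Real.pi * m * (((k - j : Fin N) : ℕ):ℝ) / N)
      = Real.cos (2 * Real.pi * m * ((k:ℕ):ℝ) / N) * Real.cos (2 * Real.pi * m * ((j:ℕ):ℝ) / N)
        + Real.sin (2 * Real.pi * m * ((k:ℕ):ℝ) / N) * Real.sin (2 * Real.pi * m * ((j:ℕ):ℝ) / N) := by
  have hN : (N:ℝ) ≠ 0 := NposR.ne'
  have h1 : Real.cos (2 * Real.pi * m * ((((k - j : Fin N) : ℕ):ℤ):ℝ) / N)
      = Real.cos (2 * Real.pi * m * (((((k:ℕ):ℤ) - ((j:ℕ):ℤ)):ℤ):ℝ) / N) :=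
    cos_congr m N hN (val_sub_congr N k j)
  push_cast at h1
  rw [show (2 * Real.pi * m * (((k:ℕ):ℝ) - ((j:ℕ):ℝ)) / N)
      = 2 * Real.pi * m * ((k:ℕ):ℝ) / N - 2 * Real.pi * m * ((j:ℕ):ℝ) / N by ring,
    Real.cos_sub] at h1
  exact_mod_cast h1

lemma sin_val_sub (m : ℕ) (k j : Fin N) :
    Real.sin (2 * Real.pi * m * (((k - j : Fin N) : ℕ):ℝ) / N)
      = Real.sin (2 * Real.pi * m * ((k:ℕ):ℝ) / N) * Real.cos (2 * Real.pi * m * ((j:ℕ):ℝ) / N)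
        - Real.cos (2 * Real.pi * m * ((k:ℕ):ℝ) / N) * Real.sin (2 * Real.pi * m * ((j:ℕ):ℝ) / N) := by
  have hN : (N:ℝ) ≠ 0 := NposR.ne'
  have h1 : Real.sin (2 * Real.pi * m * ((((k - j : Fin N) : ℕ):ℤ):ℝ) / N)
      = Real.sin (2 * Real.pi * m * (((((k:ℕ):ℤ) - ((j:ℕ):ℤ)):ℤ):ℝ) / N) :=
    sin_congr m N hN (val_sub_congr N k j)
  push_cast at h1
  rw [show (2 * Real.pi * m * (((k:ℕ):ℝ) - ((j:ℕ):ℝ)) / N)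
      = 2 * Real.pi * m * ((k:ℕ):ℝ) / N - 2 * Real.pi * m * ((j:ℕ):ℝ) / N by ring,
    Real.sin_sub] at h1
  exact_mod_cast h1

lemma sin_val_neg (m : ℕ) (j : Fin N) :
    Real.sin (2 * Real.pi * m * (((-j : Fin N) : ℕ):ℝ) / N)
      = - Real.sin (2 * Real.pi * m * ((j:ℕ):ℝ) / N) := by
  have hN : (N:ℝ) ≠ 0 := NposR.ne'
  have h1 : Real.sin (2 * Real.pi * m * ((((-j : Fin N) : ℕ):ℤ):ℝ) / N)
      = Real.sin (2 * Real.pi * m * (((-((j:ℕ):ℤ)):ℤ):ℝ) / N) :=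
    sin_congr m N hN (val_neg_congr N j)
  push_cast at h1
  rw [show (2 * Real.pi * m * (-((j:ℕ):ℝ)) / N) = -(2 * Real.pi * m * ((j:ℕ):ℝ) / N) by ring,
    Real.sin_neg] at h1
  exact_mod_cast h1

/-! ### Spectral lemmas -/

lemma conv_reindex (a f : Fin N → ℝ) (k : Fin N) :
    ∑ l : Fin N, a (k - l) * f l = ∑ j : Fin N, a j * f (k - j) := by
  apply Fintype.sum_equiv (Equiv.subLeft k)
  intro j
  simp [Equiv.subLeft]

lemma sum_sin_zero (a : Fin N → ℝ) (ha : ∀ k, a (-k) = a k) (m : ℕ) :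
    ∑ j : Fin N, a j * Real.sin (2 * Real.pi * m * ((j:ℕ):ℝ) / N) = 0 := by
  have h : ∑ j : Fin N, a j * Real.sin (2 * Real.pi * m * ((j:ℕ):ℝ) / N)
      = ∑ j : Fin N, a (-j) * Real.sin (2 * Real.pi * m * (((-j : Fin N):ℕ):ℝ) / N) := by
    apply Fintype.sum_equiv (Equiv.neg (Fin N))
    intro j
    simp
  have h2 : ∀ j : Fin N, a (-j) * Real.sin (2 * Real.pi * m * (((-j : Fin N):ℕ):ℝ) / N)
      = -(a j * Real.sin (2 * Real.pi * m * ((j:ℕ):ℝ) / N)) := by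
    intro j
    rw [ha j, sin_val_neg]; ring
  have h4 : ∑ j : Fin N, a (-j) * Real.sin (2 * Real.pi * m * (((-j : Fin N):ℕ):ℝ) / N)
      = -∑ j : Fin N, a j * Real.sin (2 * Real.pi * m * ((j:ℕ):ℝ) / N) := by
    rw [Finset.sum_congr rfl (fun j _ => h2 j)]
    exact Finset.sum_neg_distrib _
  have h5 := h.trans h4
  linarith

/-- the Fourier multiplier of `a` -/
noncomputable def mult (N : ℕ) [NeZero N] (a : Fin N → ℝ) (m : ℕ) : ℝ :=
  (1 / (N:ℝ)) * ∑ j : Fin N, a j * Real.cos (2 * Real.pi * m * ((j:ℕ):ℝ) / N)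

lemma conv_phi (a : Fin N → ℝ) (ha : ∀ k, a (-k) = a k) (m : ℕ) (k : Fin N) :
    convN N a (phiN N m) k = mult N a m * phiN N m k := by
  rcases eq_or_ne m 0 with rfl | hm
  · simp only [convN, phiN, mult]
    rw [conv_reindex]
    simp
  · simp only [convN, phiN, if_neg hm, mult]
    rw [conv_reindex]
    have hterm : ∀ j : Fin N, a j * (Real.sqrt 2 * Real.cos (2 * Real.pi * m * (((k - j : Fin N):ℕ):ℝ) / N))
        = Real.sqrt 2 * Real.cos (2 * Real.pi * m * ((k:ℕ):ℝ) / N) * (a j * Real.cos (2 * Real.pi * m * ((j:ℕ):ℝ) / N))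
          + Real.sqrt 2 * Real.sin (2 * Real.pi * m * ((k:ℕ):ℝ) / N) * (a j * Real.sin (2 * Real.pi * m * ((j:ℕ):ℝ) / N)) := by
      intro j
      rw [cos_val_sub]
      ring
    rw [Finset.sum_congr rfl (fun j _ => hterm j), Finset.sum_add_distrib,
      ← Finset.mul_sum, ← Finset.mul_sum, sum_sin_zero a ha m]
    ring

lemma conv_psi (a : Fin N → ℝ) (ha : ∀ k, a (-k) = a k) (m : ℕ) (k : Fin N) :
    convN N a (psiN N m) k = mult N a m * psiN N m k := by
  simp only [convN, psiN, mult]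
  rw [conv_reindex]
  have hterm : ∀ j : Fin N, a j * (Real.sqrt 2 * Real.sin (2 * Real.pi * m * (((k - j : Fin N):ℕ):ℝ) / N))
      = Real.sqrt 2 * Real.sin (2 * Real.pi * m * ((k:ℕ):ℝ) / N) * (a j * Real.cos (2 * Real.pi * m * ((j:ℕ):ℝ) / N))
        - Real.cos (2 * Real.pi * m * ((k:ℕ):ℝ) / N) * Real.sqrt 2 * (a j * Real.sin (2 * Real.pi * m * ((j:ℕ):ℝ) / N)) := by
    intro j
    rw [sin_val_sub]
    ring
  rw [Finset.sum_congr rfl (fun j _ => hterm j), Finset.sum_sub_distrib,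
    ← Finset.mul_sum, ← Finset.mul_sum, sum_sin_zero a ha m]
  ring

lemma ip_conv_symm (a f g : Fin N → ℝ) (ha : ∀ k, a (-k) = a k) :
    ip N (convN N a f) g = ip N f (convN N a g) := by
  simp only [ip, convN, Finset.mul_sum, Finset.sum_mul]
  rw [Finset.sum_comm]
  apply Finset.sum_congr rfl
  intro l _
  apply Finset.sum_congr rfl
  intro k _
  have : a (l - k) = a (k - l) := by
    rw [show l - k = -(k - l) from (neg_sub k l).symm, ha]
  rw [this]
  ring

lemma ip_sub (N : ℕ) (f g h : Fin N → ℝ) :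
    ip N (fun k => f k - g k) h = ip N f h - ip N g h := by
  simp only [ip, sub_mul, Finset.sum_sub_distrib]
  ring

lemma ip_smul_right (N : ℕ) (c : ℝ) (f g : Fin N → ℝ) :
    ip N f (fun k => c * g k) = c * ip N f g := by
  simp only [ip]
  rw [show (∑ j, f j * (c * g j)) = c * ∑ j, f j * g j from by
    rw [Finset.mul_sum]; exact Finset.sum_congr rfl (fun j _ => by ring)]
  ring

lemma coeff_diff (a φ : Fin N → ℝ) (ha : ∀ k, a (-k) = a k) (m : ℕ) (ψ : Fin N → ℝ)
    (hψ : ∀ k, convN N a ψ k = mult N a m * ψ k) :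
    ip N (fun k => convN N a φ k - φ k) ψ = (mult N a m - 1) * ip N φ ψ := by
  rw [ip_sub, ip_conv_symm a φ ψ ha]
  have : ip N φ (convN N a ψ) = mult N a m * ip N φ ψ := by
    have he : ip N φ (convN N a ψ) = ip N φ (fun k => mult N a m * ψ k) := by
      unfold ip
      congr 1
      apply Finset.sum_congr rfl
      intro j _
      rw [hψ j]
    rw [he, ip_smul_right]
  rw [this]
  ring

/-! ### Mollifier facts -/

section moll
variable {ρ : ℝ → ℝ} {ε : ℝ}

lemma moll_cont (hρsm : Continuous ρ) (hε : 0 < ε) : Continuous (mollify ρ ε) :=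
  continuous_const.mul (hρsm.comp (continuous_id.div_const ε))

lemma moll_nonneg (hρpos : ∀ x, 0 ≤ ρ x) (hε : 0 < ε) : ∀ y, 0 ≤ mollify ρ ε y := fun y =>
  mul_nonneg (by positivity) (hρpos _)

lemma rho_zero (hρsupp : Function.support ρ ⊆ Set.Ioo (-(1/2) : ℝ) (1/2)) {x : ℝ}
    (hx : (1:ℝ)/2 ≤ |x|) : ρ x = 0 := by
  by_contra h
  have hmem := hρsupp (Function.mem_support.mpr h)
  obtain ⟨h1, h2⟩ := hmem
  rcases abs_le.mp (le_of_eq (rfl : |x| = |x|)) with _ -- dummy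
  rcases le_or_gt 0 x with hx0 | hx0
  · rw [abs_of_nonneg hx0] at hx; linarith
  · rw [abs_of_neg hx0] at hx; linarith

lemma moll_zero (hρsupp : Function.support ρ ⊆ Set.Ioo (-(1/2) : ℝ) (1/2)) (hε : 0 < ε)
    {y : ℝ} (hy : ε/2 ≤ |y|) : mollify ρ ε y = 0 := by
  have : (1:ℝ)/2 ≤ |y / ε| := by
    rw [abs_div, abs_of_pos hε, le_div_iff₀ hε]
    linarith
  simp [mollify, rho_zero hρsupp this]

lemma rho_integrable (hρsm : Continuous ρ)
    (hρsupp : Function.support ρ ⊆ Set.Ioo (-(1/2) : ℝ) (1/2)) : Integrable ρ := by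
  apply hρsm.integrable_of_hasCompactSupport
  apply HasCompactSupport.intro (isCompact_Icc (a := -(1/2 : ℝ)) (b := 1/2))
  intro x hx
  apply rho_zero hρsupp
  simp only [Set.mem_Icc, not_and_or, not_le] at hx
  rcases hx with h | h
  · rw [abs_of_neg (by linarith)]; linarith
  · rw [abs_of_pos (by linarith)]; linarith

lemma moll_integrable (hρsm : Continuous ρ)
    (hρsupp : Function.support ρ ⊆ Set.Ioo (-(1/2) : ℝ) (1/2)) (hε : 0 < ε) :
    Integrable (mollify ρ ε) :=
  ((rho_integrable hρsm hρsupp).comp_div hε.ne').const_mul _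

lemma moll_total (hρint : ∫ x : ℝ, ρ x = 1) (hε : 0 < ε) :
    ∫ y : ℝ, mollify ρ ε y = 1 := by
  unfold mollify
  rw [MeasureTheory.integral_const_mul, MeasureTheory.Measure.integral_comp_div ρ ε, hρint]
  simp [abs_of_pos hε]
  field_simp

lemma moll_even (hρeven : ∀ x, ρ (-x) = ρ x) (y : ℝ) : mollify ρ ε (-y) = mollify ρ ε y := by
  unfold mollify
  rw [neg_div, hρeven]

end moll

/-! ### Cell geometry -/

noncomputable def loC (N : ℕ) (k : Fin N) : ℝ := (2 * (centIdx N k : ℝ) - 1) / (2 * N)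
noncomputable def hiC (N : ℕ) (k : Fin N) : ℝ := (2 * (centIdx N k : ℝ) + 1) / (2 * N)

lemma loC_le_hiC (k : Fin N) : loC N k ≤ hiC N k := by
  unfold loC hiC
  have h2N : (0:ℝ) < 2*N := by have := NposR (N := N); linarith
  rw [div_le_div_iff₀ h2N h2N]
  nlinarith

lemma centIdx_neg (hN : Odd N) (k : Fin N) :
    centIdx N (-k) = - centIdx N k := by
  obtain ⟨t, ht⟩ := hN
  have hv : (k : ℕ) < N := k.isLt
  have hneg : ((-k : Fin N) : ℕ) = if (k:ℕ) = 0 then 0 else N - (k:ℕ) := by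
    rw [Fin.neg_def]
    rcases eq_or_ne (k:ℕ) 0 with h0 | h0
    · simp [h0]
    · simp only [if_neg h0]
      exact Nat.mod_eq_of_lt (by omega)
  unfold centIdx
  rw [hneg]
  split_ifs <;> push_cast <;> omega

lemma projN_even (hN : Odd N) {f : ℝ → ℝ} (hfe : ∀ y, f (-y) = f y) (k : Fin N) :
    projN N f (-k) = projN N f k := by
  unfold projN
  rw [centIdx_neg hN]
  congr 1
  have e1 : (2 * ((-(centIdx N k) : ℤ) : ℝ) - 1) / (2 * N)
      = -((2 * (centIdx N k : ℝ) + 1) / (2 * N)) := by push_cast; ring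
  have e2 : (2 * ((-(centIdx N k) : ℤ) : ℝ) + 1) / (2 * N)
      = -((2 * (centIdx N k : ℝ) - 1) / (2 * N)) := by push_cast; ring
  rw [e1, e2, ← intervalIntegral.integral_comp_neg f]
  exact intervalIntegral.integral_congr (fun y _ => hfe y)

lemma mass_sum_eq_interval (hN : Odd N) (f : ℝ → ℝ) (hf : Continuous f) :
    ∑ k : Fin N, ∫ y in loC N k..hiC N k, f y = ∫ y in (-(1:ℝ)/2)..(1/2), f y := by
  classical
  obtain ⟨t, ht⟩ := hN
  set h' : ℕ := (N-1)/2 with hh'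
  have hNn : N = 2*h'+1 := by omega
  set g : ℕ → ℝ := fun i => (2 * ((i:ℝ) - (h':ℝ)) - 1) / (2 * N) with hg
  have hadj : ∑ i ∈ Finset.range N, ∫ y in (g i)..(g (i+1)), f y = ∫ y in (g 0)..(g N), f y :=
    intervalIntegral.sum_integral_adjacent_intervals (fun i _ => hf.intervalIntegrable _ _)
  have hNr : (N:ℝ) = 2*(h':ℝ)+1 := by rw [hNn]; push_cast; ring
  have hg0 : g 0 = -(1:ℝ)/2 := by
    simp only [hg, Nat.cast_zero]
    rw [hNr]; field_simp; ring
  have hgN : g N = 1/2 := by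
    simp only [hg]
    rw [hNr]; field_simp; ring
  rw [← hg0, ← hgN, ← hadj]
  refine (Finset.sum_bij'
    (i := fun (i : ℕ) (hi : i ∈ Finset.range N) =>
      (⟨if h' ≤ i then i - h' else i + h' + 1, by
          have := Finset.mem_range.mp hi; split_ifs <;> omega⟩ : Fin N))
    (j := fun (k : Fin N) _ => if (k:ℕ) ≤ h' then (k:ℕ) + h' else (k:ℕ) - (h'+1))
    ?_ ?_ ?_ ?_ ?_).symm
  · intro a ha; exact Finset.mem_univ _
  · intro k _
    simp only [Finset.mem_range]
    have := k.isLt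
    split_ifs <;> omega
  · intro i hi
    have := Finset.mem_range.mp hi
    simp only
    split_ifs <;> omega
  · intro k _
    have := k.isLt
    apply Fin.ext
    simp only
    split_ifs <;> omega
  · intro i hi
    have hiN := Finset.mem_range.mp hi
    set ik : Fin N := (⟨if h' ≤ i then i - h' else i + h' + 1, by split_ifs <;> omega⟩ : Fin N) with hik
    have hcent : (centIdx N ik : ℝ) = (i:ℝ) - (h':ℝ) := by
      have : centIdx N ik = (i : ℤ) - (h' : ℤ) := by
        unfold centIdx
        simp only [hik]
        split_ifs <;> push_cast <;> omega
      rw [this]; push_cast; ring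
    have hlo : g i = loC N ik := by
      unfold loC; rw [hcent]
    have hhi : g (i+1) = hiC N ik := by
      unfold hiC; rw [hcent]; simp only [hg]; push_cast; ring_nf
    rw [hlo, hhi]

section masses
variable {f : ℝ → ℝ}

lemma mass_nonneg (hnn : ∀ y, 0 ≤ f y) (k : Fin N) : 0 ≤ ∫ y in loC N k..hiC N k, f y :=
  intervalIntegral.integral_nonneg (loC_le_hiC k) (fun y _ => hnn y)

omit [NeZero N] in
lemma interval_half_le_one (hnn : ∀ y, 0 ≤ f y) (hint : Integrable f)
    (htot : ∫ y : ℝ, f y = 1) : ∫ y in (-(1:ℝ)/2)..(1/2), f y ≤ 1 := by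
  rw [intervalIntegral.integral_of_le (by norm_num)]
  rw [← htot]
  exact setIntegral_le_integral hint (Filter.Eventually.of_forall hnn)

omit [NeZero N] in
lemma interval_half_eq_one (htot : ∫ y : ℝ, f y = 1)
    (hzero : ∀ y : ℝ, (1:ℝ)/2 ≤ |y| → f y = 0) :
    ∫ y in (-(1:ℝ)/2)..(1/2), f y = 1 := by
  rw [intervalIntegral.integral_of_le (by norm_num), ← htot]
  apply setIntegral_eq_integral_of_forall_compl_eq_zero
  intro y hy
  apply hzero
  simp only [Set.mem_Ioc, not_and_or, not_lt, not_le] at hy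
  rcases hy with h | h
  · rw [abs_of_nonpos (by linarith)]; linarith
  · rw [abs_of_pos (by linarith)]; linarith

lemma mass_cutoff {ε : ℝ} (hε : 0 < ε) (hnn : ∀ y, 0 ≤ f y)
    (hzero : ∀ y : ℝ, ε/2 ≤ |y| → f y = 0) (k : Fin N) :
    |(centIdx N k : ℝ)| * ∫ y in loC N k..hiC N k, f y
      ≤ (ε * N) * ∫ y in loC N k..hiC N k, f y := by
  have hNr := NposR (N := N)
  rcases le_or_gt |(centIdx N k : ℝ)| (ε * N) with hle | hgt
  · exact mul_le_mul_of_nonneg_right hle (mass_nonneg hnn k)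
  · have hc1 : (1:ℝ) ≤ |(centIdx N k : ℝ)| := by
      have h0 : centIdx N k ≠ 0 := by
        intro h0
        rw [h0] at hgt
        simp at hgt
        nlinarith
      exact_mod_cast Int.one_le_abs h0
    have hmass : ∫ y in loC N k..hiC N k, f y = 0 := by
      have hzero' : ∀ y ∈ Set.uIcc (loC N k) (hiC N k), f y = 0 := by
        intro y hy
        rw [Set.uIcc_of_le (loC_le_hiC k)] at hy
        obtain ⟨hy1, hy2⟩ := hy
        apply hzero
        set c : ℝ := (centIdx N k : ℝ) with hc
        rcases le_or_gt 0 c with hcpos | hcneg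
        · have hc1' : (1:ℝ) ≤ c := by rw [abs_of_nonneg hcpos] at hc1; exact hc1
          have habs : ε * N < c := by rwa [abs_of_nonneg hcpos] at hgt
          have hylo : (2*c-1)/(2*N) ≤ y := by rwa [loC, ← hc] at hy1
          have h1 : ε/2 ≤ (2*c-1)/(2*N) := by
            rw [div_le_div_iff₀ (by norm_num) (by positivity)]
            nlinarith
          calc ε/2 ≤ y := by linarith
            _ ≤ |y| := le_abs_self y
        · have hc1' : c ≤ -1 := by rw [abs_of_neg hcneg] at hc1; linarith
          have habs : ε * N < -c := by rwa [abs_of_neg hcneg] at hgt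
          have hyhi : y ≤ (2*c+1)/(2*N) := by rwa [hiC, ← hc] at hy2
          have h1 : (2*c+1)/(2*N) ≤ -(ε/2) := by
            rw [div_le_iff₀ (by positivity : (0:ℝ) < 2*N)]
            nlinarith
          calc ε/2 ≤ -y := by linarith
            _ ≤ |y| := neg_le_abs y
      calc ∫ y in loC N k..hiC N k, f y = ∫ _ in loC N k..hiC N k, (0:ℝ) :=
            intervalIntegral.integral_congr hzero'
        _ = 0 := by simp
    rw [hmass]
    simp

end masses

/-! ### Eigenvalue bounds -/

omit [NeZero N] in
lemma lamd_nonneg (N m : ℕ) : 0 ≤ lamd N m := by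
  unfold lamd
  have h := Real.cos_le_one (2 * Real.pi * m / N)
  apply mul_nonneg (by positivity)
  linarith

lemma lamd_ge (m : ℕ) (hm : m ≤ (N-1)/2) : 16 * (m:ℝ)^2 ≤ lamd N m := by
  have hNr := NposR (N := N)
  have hNn : 2*m < N := by
    have : 0 < N := Nat.pos_of_ne_zero (NeZero.ne N)
    omega
  have hx0 : 0 ≤ Real.pi * m / N := by positivity
  have hx2 : Real.pi * m / N ≤ Real.pi / 2 := by
    rw [div_le_div_iff₀ hNr (by norm_num)]
    have h2m : (2*(m:ℝ)) ≤ N := by exact_mod_cast hNn.le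
    nlinarith [Real.pi_pos]
  have hJ : 2 / Real.pi * (Real.pi * m / N) ≤ Real.sin (Real.pi * m / N) :=
    Real.mul_le_sin hx0 hx2
  have hJ' : 2 * (m:ℝ) / N ≤ Real.sin (Real.pi * m / N) := by
    have hpi := Real.pi_pos
    calc 2 * (m:ℝ) / N = 2 / Real.pi * (Real.pi * m / N) := by field_simp
      _ ≤ _ := hJ
  have hsq : Real.sin (Real.pi * m / N) ^ 2 = (1 - Real.cos (2 * Real.pi * m / N)) / 2 := by
    rw [Real.sin_sq_eq_half_sub,
      show (2*(Real.pi*(m:ℝ)/N)) = 2*Real.pi*m/N by ring]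
    ring
  have h1 : (2 * (m:ℝ) / N)^2 ≤ Real.sin (Real.pi * m / N) ^ 2 := by
    have : 0 ≤ 2 * (m:ℝ) / N := by positivity
    nlinarith
  unfold lamd
  rw [hsq] at h1
  have hrw : (2 * (m:ℝ) / N)^2 = 4 * m^2 / N^2 := by ring
  rw [hrw] at h1
  have h2 : 4 * (m:ℝ)^2 / N^2 * (2 * N^2) ≤ (1 - Real.cos (2 * Real.pi * m / N)) / 2 * (2 * N^2) :=
    mul_le_mul_of_nonneg_right h1 (by positivity)
  calc 16 * (m:ℝ)^2 = 4 * m^2 / N^2 * (2*N^2) * 2 := by field_simp; ring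
    _ ≤ (1 - Real.cos (2 * Real.pi * m / N)) / 2 * (2 * N^2) * 2 := by nlinarith [h2]
    _ = 2 * (N:ℝ)^2 * (1 - Real.cos (2 * Real.pi * m / N)) := by ring

omit [NeZero N] in
lemma one_sub_cos_le_abs (x : ℝ) : 1 - Real.cos x ≤ |x| := by
  have h1 : Real.sin (x/2)^2 = (1 - Real.cos x)/2 := by
    rw [Real.sin_sq_eq_half_sub, show 2*(x/2) = x by ring]
    ring
  have h2 : |Real.sin (x/2)| ≤ 1 := Real.abs_sin_le_one _
  have h3 : |Real.sin (x/2)| ≤ |x/2| := Real.abs_sin_le_abs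
  have h4 : Real.sin (x/2)^2 = |Real.sin (x/2)|^2 := (sq_abs _).symm
  have h5 : |x/2| = |x|/2 := by rw [abs_div]; norm_num
  nlinarith [abs_nonneg (Real.sin (x/2)), abs_nonneg x]

/-! ### Interpolation lemma -/

omit [NeZero N] in
lemma interp {u ε L θ : ℝ} (hε : 0 < ε) (hL : 0 ≤ L) (hθ0 : 0 ≤ θ) (hθ1 : θ ≤ 1)
    (h4 : u^2 ≤ 4) (hB : 1 < ε ∨ u^2 ≤ 4 * (ε^2 * (1+L))) :
    u^2 ≤ 4 * (ε^θ)^2 * (1+L)^θ := by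
  have h1L : (1:ℝ) ≤ 1 + L := by linarith
  have hrw : (ε^θ)^2 * (1+L)^θ = (ε^2 * (1+L))^θ := by
    rw [Real.mul_rpow (by positivity) (by linarith)]
    congr 1
    rw [← Real.rpow_natCast ε 2, ← Real.rpow_natCast (ε^θ) 2,
      ← Real.rpow_mul hε.le, ← Real.rpow_mul hε.le]
    norm_num
    ring_nf
  rcases hB with hε1 | hB
  · have he : 1 ≤ ε^θ := Real.one_le_rpow hε1.le hθ0
    have hl : 1 ≤ (1+L)^θ := Real.one_le_rpow h1L hθ0
    nlinarith
  · set X := ε^2*(1+L) with hX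
    have hXpos : 0 < X := by positivity
    rcases le_total 1 X with h | h
    · have hx : 1 ≤ X^θ := Real.one_le_rpow h hθ0
      rw [mul_assoc, hrw]
      nlinarith
    · have hx : X ≤ X^θ := by
        calc X = X^(1:ℝ) := (Real.rpow_one X).symm
          _ ≤ X^θ := Real.rpow_le_rpow_of_exponent_ge hXpos h hθ1
      rw [mul_assoc, hrw]
      nlinarith

end Stmt15

/-- Rate of approximation by discrete mollification ... -/
theorem stmt_15 (ρ : ℝ → ℝ) (hρsm : ContDiff ℝ (⊤ : ℕ∞) ρ) (hρpos : ∀ x, 0 ≤ ρ x)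
    (hρeven : ∀ x, ρ (-x) = ρ x)
    (hρsupp : Function.support ρ ⊆ Set.Ioo (-(1/2) : ℝ) (1/2))
    (hρint : ∫ x : ℝ, ρ x = 1)
    (α β : ℝ) (hα1 : -1 ≤ α) (hβ1 : β ≤ 1) (hαβ0 : 0 ≤ β - α) (hαβ1 : β - α ≤ 1) :
    ∃ C : ℝ, 0 < C ∧ ∀ ε : ℝ, 0 < ε → ∀ (N : ℕ) [NeZero N], Odd N → ∀ φ : Fin N → ℝ,
      sobNorm N α (fun k => convN N (projN N (mollify ρ ε)) φ k - φ k)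
        ≤ C * ε ^ (β - α) * sobNorm N β φ := by
  classical
  open Stmt15 Real MeasureTheory Finset in
  refine ⟨2, by norm_num, ?_⟩
  intro ε hε N _ hN φ
  set θ : ℝ := β - α with hθ
  have hNr : (0:ℝ) < N := NposR
  set f : ℝ → ℝ := mollify ρ ε with hfdef
  have f_cont : Continuous f := moll_cont hρsm.continuous hε
  have f_nonneg : ∀ y, 0 ≤ f y := moll_nonneg hρpos hε
  have f_int : Integrable f := moll_integrable hρsm.continuous hρsupp hε
  have f_total : ∫ y : ℝ, f y = 1 := moll_total hρint hε
  have f_zero : ∀ y : ℝ, ε/2 ≤ |y| → f y = 0 := fun y hy => moll_zero hρsupp hε hy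
  have f_even : ∀ y, f (-y) = f y := fun y => moll_even hρeven y
  set a : Fin N → ℝ := projN N f with hadef
  have haeven : ∀ k : Fin N, a (-k) = a k := fun k => projN_even hN f_even k
  -- identify the multiplier
  set mass : Fin N → ℝ := fun k => ∫ y in loC N k..hiC N k, f y with hmassdef
  have hproj : ∀ k, a k = (N:ℝ) * mass k := fun k => rfl
  have hmassnn : ∀ k, 0 ≤ mass k := fun k => mass_nonneg f_nonneg k
  have hS_le : ∑ k : Fin N, mass k ≤ 1 := by
    rw [hmassdef, mass_sum_eq_interval hN f f_cont]
    exact interval_half_le_one f_nonneg f_int f_total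
  have hmult : ∀ m : ℕ, mult N a m
      = ∑ j : Fin N, Real.cos (2 * Real.pi * m * ((centIdx N j : ℤ) : ℝ) / N) * mass j := by
    intro m
    unfold mult
    have hcos : ∀ j : Fin N, Real.cos (2 * Real.pi * m * ((j:ℕ):ℝ) / N)
        = Real.cos (2 * Real.pi * m * ((centIdx N j : ℤ):ℝ) / N) := by
      intro j
      have hdvd : (N:ℤ) ∣ (((j:ℕ):ℤ) - centIdx N j) := by
        unfold centIdx
        split_ifs
        · exact ⟨0, by ring⟩
        · exact ⟨1, by ring⟩
      have := cos_congr m N hNr.ne' hdvd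
      convert this using 3 <;> push_cast <;> ring
    rw [Finset.sum_congr rfl (fun j _ => by rw [hproj j, hcos j])]
    rw [show (∑ j : Fin N, (N:ℝ) * mass j * Real.cos (2 * Real.pi * m * ((centIdx N j : ℤ):ℝ) / N))
        = (N:ℝ) * ∑ j : Fin N, Real.cos (2 * Real.pi * m * ((centIdx N j : ℤ):ℝ) / N) * mass j from by
      rw [Finset.mul_sum]; exact Finset.sum_congr rfl (fun j _ => by ring)]
    field_simp
  -- bounds on the multiplier
  have hmu_le : ∀ m : ℕ, mult N a m ≤ 1 := by
    intro m
    rw [hmult m]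
    calc ∑ j : Fin N, Real.cos (2 * Real.pi * m * ((centIdx N j : ℤ):ℝ) / N) * mass j
        ≤ ∑ j : Fin N, mass j := by
          apply Finset.sum_le_sum
          intro j _
          have := Real.cos_le_one (2 * Real.pi * m * ((centIdx N j : ℤ):ℝ) / N)
          nlinarith [hmassnn j]
      _ ≤ 1 := hS_le
  have hmu_ge : ∀ m : ℕ, -1 ≤ mult N a m := by
    intro m
    rw [hmult m]
    calc (-1:ℝ) ≤ -∑ j : Fin N, mass j := by linarith
      _ ≤ ∑ j : Fin N, Real.cos (2 * Real.pi * m * ((centIdx N j : ℤ):ℝ) / N) * mass j := by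
          rw [← Finset.sum_neg_distrib]
          apply Finset.sum_le_sum
          intro j _
          have := Real.neg_one_le_cos (2 * Real.pi * m * ((centIdx N j : ℤ):ℝ) / N)
          nlinarith [hmassnn j]
  -- Lipschitz bound for ε ≤ 1
  have hmu_lip : ε ≤ 1 → ∀ m : ℕ, 1 - mult N a m ≤ 2 * Real.pi * m * ε := by
    intro hε1 m
    have hS_eq : ∑ k : Fin N, mass k = 1 := by
      rw [hmassdef, mass_sum_eq_interval hN f f_cont]
      exact interval_half_eq_one f_total (fun y hy => f_zero y (by linarith))
    rw [hmult m, ← hS_eq, ← Finset.sum_sub_distrib]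
    have hterm : ∀ j : Fin N,
        mass j - Real.cos (2 * Real.pi * m * ((centIdx N j : ℤ):ℝ) / N) * mass j
          ≤ (2 * Real.pi * m / N) * (ε * N * mass j) := by
      intro j
      have h1 : (1 - Real.cos (2 * Real.pi * m * ((centIdx N j : ℤ):ℝ) / N))
          ≤ (2 * Real.pi * m / N) * |((centIdx N j : ℤ):ℝ)| := by
        calc 1 - Real.cos (2 * Real.pi * m * ((centIdx N j : ℤ):ℝ) / N)
            ≤ |2 * Real.pi * m * ((centIdx N j : ℤ):ℝ) / N| := one_sub_cos_le_abs _
          _ = (2 * Real.pi * m / N) * |((centIdx N j : ℤ):ℝ)| := by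
              rw [abs_div, abs_mul, abs_of_nonneg (by positivity : (0:ℝ) ≤ 2 * Real.pi * (m:ℝ)),
                abs_of_nonneg hNr.le]
              ring
      have h2 : |((centIdx N j : ℤ):ℝ)| * mass j ≤ ε * N * mass j :=
        mass_cutoff hε f_nonneg f_zero j
      have hfac : (0:ℝ) ≤ 2 * Real.pi * m / N := by positivity
      calc mass j - Real.cos (2 * Real.pi * m * ((centIdx N j : ℤ):ℝ) / N) * mass j
          = (1 - Real.cos (2 * Real.pi * m * ((centIdx N j : ℤ):ℝ) / N)) * mass j := by ring
        _ ≤ ((2 * Real.pi * m / N) * |((centIdx N j : ℤ):ℝ)|) * mass j :=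
            mul_le_mul_of_nonneg_right h1 (hmassnn j)
        _ = (2 * Real.pi * m / N) * (|((centIdx N j : ℤ):ℝ)| * mass j) := by ring
        _ ≤ (2 * Real.pi * m / N) * (ε * N * mass j) :=
            mul_le_mul_of_nonneg_left h2 hfac
    calc ∑ j : Fin N, (mass j - Real.cos (2 * Real.pi * m * ((centIdx N j : ℤ):ℝ) / N) * mass j)
        ≤ ∑ j : Fin N, (2 * Real.pi * m / N) * (ε * N * mass j) :=
          Finset.sum_le_sum (fun j _ => hterm j)
      _ = 2 * Real.pi * m * ε * ∑ j : Fin N, mass j := by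
          rw [Finset.mul_sum]
          apply Finset.sum_congr rfl
          intro j _
          field_simp
      _ = 2 * Real.pi * m * ε := by rw [hS_eq, mul_one]
  -- key pointwise bound
  have hkey : ∀ m ∈ Finset.range ((N - 1) / 2 + 1),
      (mult N a m - 1)^2 ≤ 4 * (ε^θ)^2 * (1 + lamd N m)^θ := by
    intro m hm
    have hmle : m ≤ (N-1)/2 := by
      have := Finset.mem_range.mp hm; omega
    have hL0 := lamd_nonneg N m
    have h4 : (mult N a m - 1)^2 ≤ 4 := by
      have := hmu_le m; have := hmu_ge m; nlinarith
    apply interp hε hL0 hαβ0 hαβ1 h4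
    rcases le_or_gt ε 1 with hε1 | hε1
    · right
      have hlip := hmu_lip hε1 m
      have hlam := lamd_ge (N := N) m hmle
      have hge := hmu_le m
      have hπ : Real.pi ≤ 4 := by linarith [Real.pi_le_four]
      have hπ0 := Real.pi_pos
      have hmn : (0:ℝ) ≤ (m:ℝ) := Nat.cast_nonneg m
      have hB0 : 0 ≤ 1 - mult N a m := by linarith
      have h1 : (1 - mult N a m)^2 ≤ (2 * Real.pi * (m:ℝ) * ε)^2 := by nlinarith
      have h3 : Real.pi^2 ≤ 16 := by nlinarith
      have h5 : 0 ≤ ε^2 * (lamd N m - 16 * (m:ℝ)^2) := mul_nonneg (sq_nonneg ε) (by linarith)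
      nlinarith [h1, h3, h5, sq_nonneg ((m:ℝ)*ε), sq_nonneg ε]
    · left; exact hε1
  -- sum up
  have hsum : sobNormSq N α (fun k => convN N a φ k - φ k)
      ≤ 4 * (ε^θ)^2 * sobNormSq N β φ := by
    unfold sobNormSq
    rw [Finset.mul_sum]
    apply Finset.sum_le_sum
    intro m hm
    have hL0 := lamd_nonneg N m
    have hLpos : (0:ℝ) < 1 + lamd N m := by linarith
    have hcphi : ip N (fun k => convN N a φ k - φ k) (phiN N m)
        = (mult N a m - 1) * ip N φ (phiN N m) :=
      coeff_diff a φ haeven m (phiN N m) (conv_phi a haeven m)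
    have hcpsi : ip N (fun k => convN N a φ k - φ k) (psiN N m)
        = (mult N a m - 1) * ip N φ (psiN N m) :=
      coeff_diff a φ haeven m (psiN N m) (conv_psi a haeven m)
    rw [hcphi, hcpsi]
    have hXnn : (0:ℝ) ≤ (ip N φ (phiN N m))^2 + (ip N φ (psiN N m))^2 := by positivity
    have hkeym := hkey m hm
    have hstep : ((mult N a m - 1) * ip N φ (phiN N m))^2
          + ((mult N a m - 1) * ip N φ (psiN N m))^2
        = (mult N a m - 1)^2 * ((ip N φ (phiN N m))^2 + (ip N φ (psiN N m))^2) := by ring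
    rw [hstep]
    have hbound : (mult N a m - 1)^2 * ((ip N φ (phiN N m))^2 + (ip N φ (psiN N m))^2)
        ≤ (4 * (ε^θ)^2 * (1 + lamd N m)^θ) * ((ip N φ (phiN N m))^2 + (ip N φ (psiN N m))^2) :=
      mul_le_mul_of_nonneg_right hkeym hXnn
    have hpow : (0:ℝ) ≤ (1 + lamd N m)^α := Real.rpow_nonneg hLpos.le α
    calc (1 + lamd N m)^α * ((mult N a m - 1)^2 * ((ip N φ (phiN N m))^2 + (ip N φ (psiN N m))^2))
        ≤ (1 + lamd N m)^α * ((4 * (ε^θ)^2 * (1 + lamd N m)^θ) * ((ip N φ (phiN N m))^2 + (ip N φ (psiN N m))^2)) :=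
          mul_le_mul_of_nonneg_left hbound hpow
      _ = 4 * (ε^θ)^2 * (((1 + lamd N m)^α * (1 + lamd N m)^θ) * ((ip N φ (phiN N m))^2 + (ip N φ (psiN N m))^2)) := by ring
      _ = 4 * (ε^θ)^2 * ((1 + lamd N m)^β * ((ip N φ (phiN N m))^2 + (ip N φ (psiN N m))^2)) := by
          rw [← Real.rpow_add hLpos, hθ, show α + (β - α) = β by ring]
  -- take square roots
  have hrnn : (0:ℝ) ≤ ε^θ := Real.rpow_nonneg hε.le θ
  unfold sobNorm
  calc Real.sqrt (sobNormSq N α (fun k => convN N a φ k - φ k))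
      ≤ Real.sqrt (4 * (ε^θ)^2 * sobNormSq N β φ) := Real.sqrt_le_sqrt hsum
    _ = Real.sqrt ((2*ε^θ)^2 * sobNormSq N β φ) := by rw [show (4:ℝ) * (ε^θ)^2 = (2*ε^θ)^2 by ring]
    _ = Real.sqrt ((2*ε^θ)^2) * Real.sqrt (sobNormSq N β φ) := Real.sqrt_mul (sq_nonneg _) _
    _ = 2 * ε^θ * Real.sqrt (sobNormSq N β φ) := by
        rw [Real.sqrt_sq (by positivity)]
    _ = 2 * ε^(β-α) * Real.sqrt (sobNormSq N β φ) := by rw [hθ]
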